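/- There exists a strictly a_{ℵ₀}-subcompact Hausdorff space X such that X is not homeomorphic to Y \ C for any a_{ℵ₀}-space Y and any countable subset C of Y. -/

import Mathlib

open Cardinal Topology

universe u

/-- A Hausdorff space is *subcompact* if it admits a condensation (continuous bijection)
onto a compact Hausdorff space. -/
def Subcompact (X : Type u) [TopologicalSpace X] : Prop :=
  ∃ (Y : Type u) (_ : TopologicalSpace Y), CompactSpace Y ∧ T2Space Y ∧
    ∃ f : X → Y, Continuous f ∧ Function.Bijective f

/-- A compact Hausdorff space `X` is an `a_τ`-space if for every `C ⊆ X` with `#C ≤ τ`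
there is a condensation from the subspace `X \ C` onto a compact Hausdorff space. -/
def ATauSpace (τ : Cardinal.{u}) (X : Type u) [TopologicalSpace X] : Prop :=
  CompactSpace X ∧ T2Space X ∧ ∀ C : Set X, #C ≤ τ → Subcompact ↥(Cᶜ)

/-- A compact Hausdorff space `X` is a strictly `a_τ`-space if for every `C ⊆ X` with
`#C ≤ τ` there is a condensation from `X \ C` onto a compact Hausdorff space `K`
extending to a continuous map `X → K` (encoded: a continuous `g : X → K` whose
restriction to `X \ C` is bijective). -/
def StrictATauSpace (τ : Cardinal.{u}) (X : Type u) [TopologicalSpace X] : Prop :=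
  CompactSpace X ∧ T2Space X ∧ ∀ C : Set X, #C ≤ τ →
    ∃ (K : Type u) (_ : TopologicalSpace K), CompactSpace K ∧ T2Space K ∧
      ∃ g : X → K, Continuous g ∧ Function.Bijective fun x : ↥(Cᶜ) => g x

/-- A Hausdorff space `X` is `a_τ`-subcompact if for every `C ⊆ X` with `#C ≤ τ` there
is a condensation from `X \ C` onto an `a_τ`-space. -/
def ATauSubcompact (τ : Cardinal.{u}) (X : Type u) [TopologicalSpace X] : Prop :=
  ∀ C : Set X, #C ≤ τ →
    ∃ (Y : Type u) (_ : TopologicalSpace Y), ATauSpace τ Y ∧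
      ∃ f : ↥(Cᶜ) → Y, Continuous f ∧ Function.Bijective f

/-- A Hausdorff space `X` is strictly `a_τ`-subcompact if for every `C ⊆ X` with `#C ≤ τ`
there is a condensation from `X \ C` onto a strictly `a_τ`-space `Y` extending to a
continuous map `X → Y`. -/
def StrictATauSubcompact (τ : Cardinal.{u}) (X : Type u) [TopologicalSpace X] : Prop :=
  ∀ C : Set X, #C ≤ τ →
    ∃ (Y : Type u) (_ : TopologicalSpace Y), StrictATauSpace τ Y ∧
      ∃ g : X → Y, Continuous g ∧ Function.Bijective fun x : ↥(Cᶜ) => g x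

/-- A Hausdorff space `X` is almost strictly `a_τ`-subcompact if for every `C ⊆ X` with
`#C ≤ τ` there is a condensation from `X \ C` onto a compact Hausdorff space `Y`
extending to a continuous map `X → Y`. -/
def AlmostStrictATauSubcompact (τ : Cardinal.{u}) (X : Type u) [TopologicalSpace X] : Prop :=
  ∀ C : Set X, #C ≤ τ →
    ∃ (Y : Type u) (_ : TopologicalSpace Y), CompactSpace Y ∧ T2Space Y ∧
      ∃ g : X → Y, Continuous g ∧ Function.Bijective fun x : ↥(Cᶜ) => g x


namespace Stmt1

abbrev Ct : Type := ℕ → Bool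

instance : Uncountable Ct := by
  rw [← Cardinal.aleph0_lt_mk_iff]
  have h2 : #Ct = 2 ^ aleph0 := by rw [Cardinal.mk_arrow]; simp
  rw [h2]
  exact Cardinal.cantor aleph0

/-- cylinder around `a` of depth `M` -/
def cyl (a : Ct) (M : ℕ) : Set Ct := {y | ∀ i < M, y i = a i}

lemma isOpen_cyl (a : Ct) (M : ℕ) : IsOpen (cyl a M) := by
  have : cyl a M = ⋂ i ∈ Finset.range M, (fun y : Ct => y i) ⁻¹' {a i} := by
    ext y; simp [cyl]
  rw [this]
  exact isOpen_biInter_finset fun i _ => (continuous_apply i).isOpen_preimage _ (isOpen_discrete _)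

lemma mem_cyl_self (a : Ct) (M : ℕ) : a ∈ cyl a M := fun _ _ => rfl

lemma cyl_antitone (a : Ct) {M M' : ℕ} (h : M ≤ M') : cyl a M' ⊆ cyl a M :=
  fun _ hy i hi => hy i (lt_of_lt_of_le hi h)

lemma eq_of_mem_all_cyl {a b : Ct} (h : ∀ M, b ∈ cyl a M) : b = a := by
  funext i; exact h (i + 1) i (Nat.lt_succ_self i)

lemma exists_cyl_subset {a : Ct} {V : Set Ct} (hV : V ∈ 𝓝 a) : ∃ M, cyl a M ⊆ V := by
  rw [nhds_pi, Filter.mem_pi'] at hV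
  obtain ⟨I, t, ht, hsub⟩ := hV
  refine ⟨(I.sup id) + 1, fun y hy => hsub fun i hi => ?_⟩
  have : y i = a i := hy i (Nat.lt_succ_of_le (Finset.le_sup (f := id) hi))
  rw [this]
  exact mem_of_mem_nhds (ht i)

lemma exists_notMem_countable (s : Set Ct) (hs : s.Countable) (a : Ct) (M : ℕ) :
    ∃ y ∈ cyl a M, y ∉ s := by
  by_contra h
  push_neg at h
  set F : Ct → Ct := fun z i => if h : i < M then a i else z (i - M) with hF
  have hFinj : Function.Injective F := by
    intro z z' hzz
    funext j
    have := congrFun hzz (j + M)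
    simpa [hF, Nat.add_sub_cancel] using this
  have hFcyl : ∀ z, F z ∈ cyl a M := by intro z i hi; simp [hF, hi]
  have : (Set.range F).Countable := hs.mono (by rintro _ ⟨z, rfl⟩; exact h _ (hFcyl z))
  have hcnt : Countable Ct := by
    have e := Equiv.ofInjective F hFinj
    have : Countable (Set.range F) := this
    exact Countable.of_equiv _ e.symm
  exact (inferInstance : Uncountable Ct).not_countable hcnt

section Seq

variable (C : Set Ct) (hC : C.Countable) (c : ℕ → Ct)

private lemma key (hC : C.Countable) (c : ℕ → Ct) (n : ℕ) (l : List Ct) :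
    ∃ y, (∀ i < n, y i = c n i) ∧ y ∉ C ∧ y ∉ l := by
  obtain ⟨y, hy1, hy2⟩ := exists_notMem_countable (C ∪ {a | a ∈ l}) (hC.union l.finite_toSet.countable) (c n) n
  exact ⟨y, hy1, fun h => hy2 (Or.inl h), fun h => hy2 (Or.inr h)⟩

noncomputable def LL (hC : C.Countable) (c : ℕ → Ct) : ℕ → List Ct
  | 0 => []
  | n + 1 => Classical.choose (key C hC c n (LL hC c n)) :: LL hC c n

noncomputable def xseq (hC : C.Countable) (c : ℕ → Ct) (n : ℕ) : Ct :=
  Classical.choose (key C hC c n (LL C hC c n))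

lemma xseq_spec (n : ℕ) :
    (∀ i < n, xseq C hC c n i = c n i) ∧ xseq C hC c n ∉ C ∧ xseq C hC c n ∉ LL C hC c n :=
  Classical.choose_spec (key C hC c n (LL C hC c n))

lemma xseq_mem_LL {m n : ℕ} (h : m < n) : xseq C hC c m ∈ LL C hC c n := by
  induction n with
  | zero => omega
  | succ n ih =>
    rw [LL]
    rcases Nat.lt_succ_iff_lt_or_eq.mp h with h' | h'
    · exact List.mem_cons_of_mem _ (ih h')
    · subst h'; exact List.mem_cons_self

lemma xseq_injective : Function.Injective (xseq C hC c) := by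
  intro m n hmn
  by_contra hne
  rcases Nat.lt_or_ge m n with h | h
  · exact (xseq_spec C hC c n).2.2 (hmn ▸ xseq_mem_LL C hC c h)
  · have h' : n < m := by omega
    exact (xseq_spec C hC c m).2.2 (hmn ▸ xseq_mem_LL C hC c h')

end Seq

section Rel

variable (S : Set ℕ) (c x : ℕ → Ct)

/-- the pair-collapsing relation -/
def rel (a b : Ct) : Prop :=
  a = b ∨ ∃ n ∈ S, (a = c n ∧ b = x n) ∨ (a = x n ∧ b = c n)

variable {S c x}
variable (hcInj : Set.InjOn c S) (hxInj : Function.Injective x)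
    (hxC : ∀ n ∈ S, ∀ m ∈ S, x n ≠ c m)

lemma rel_refl (a : Ct) : rel S c x a a := Or.inl rfl

lemma rel_symm {a b : Ct} (h : rel S c x a b) : rel S c x b a := by
  rcases h with h | ⟨n, hn, h | h⟩
  · exact Or.inl h.symm
  · exact Or.inr ⟨n, hn, Or.inr ⟨h.2, h.1⟩⟩
  · exact Or.inr ⟨n, hn, Or.inl ⟨h.2, h.1⟩⟩

include hcInj hxInj hxC in
lemma rel_trans {a b d : Ct} (h1 : rel S c x a b) (h2 : rel S c x b d) : rel S c x a d := by
  rcases h1 with h1 | ⟨n, hn, h1⟩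
  · exact h1 ▸ h2
  · rcases h2 with h2 | ⟨m, hm, h2⟩
    · exact h2 ▸ Or.inr ⟨n, hn, h1⟩
    · rcases h1 with ⟨ha, hb⟩ | ⟨ha, hb⟩ <;> rcases h2 with ⟨hb', hd⟩ | ⟨hb', hd⟩
      · -- b = x n and b = c m : impossible
        exact absurd (hb.symm.trans hb') (hxC n hn m hm)
      · -- b = x n, b = x m : n = m, so a = c n, d = c m = c n
        have : n = m := hxInj (hb.symm.trans hb')
        exact Or.inl (ha.trans (this ▸ hd.symm))
      · -- b = c n, b = c m : n = m by InjOn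
        have : n = m := hcInj hn hm (hb.symm.trans hb')
        exact Or.inl (ha.trans (this ▸ hd.symm))
      · -- b = c n and b = x m : impossible
        exact absurd (hb.symm.trans hb').symm (hxC m hm n hn)

/-- saturation of a set -/
def sat (F : Set Ct) : Set Ct := {a | ∃ b, rel S c x a b ∧ b ∈ F}

variable (hagree : ∀ n, ∀ i < n, x n i = c n i)

include hagree in
lemma sat_closed {F : Set Ct} (hF : IsClosed F) : IsClosed (sat (S := S) (c := c) (x := x) F) := by
  rw [← isOpen_compl_iff] at hF ⊢
  rw [isOpen_iff_mem_nhds] at hF ⊢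
  intro a ha
  by_contra hnb
  -- a is not in sat F; in particular a ∉ F
  have haF : a ∉ F := fun h => ha ⟨a, rel_refl a, h⟩
  obtain ⟨M₁, hM₁⟩ := exists_cyl_subset (hF a haF)
  -- every cylinder around a meets sat F
  have hmeet : ∀ M, ∃ b ∈ cyl a M, b ∈ sat (S := S) (c := c) (x := x) F := by
    intro M
    by_contra hno
    push_neg at hno
    apply hnb
    rw [mem_nhds_iff]
    exact ⟨cyl a M, fun y hy hsy => hno y hy hsy, isOpen_cyl a M, mem_cyl_self a M⟩
  -- analysis of witnesses
  have hwit : ∀ M, ∃ n ∈ S, (c n ∈ cyl a M ∧ x n ∈ F) ∨ (x n ∈ cyl a M ∧ c n ∈ F) := by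
    intro M
    obtain ⟨b, hbc, b', hrel, hb'F⟩ := hmeet (max M M₁)
    have hbF : b ∉ F := fun h => (hM₁ (cyl_antitone a (le_max_right M M₁) hbc)) h
    rcases hrel with h | ⟨n, hn, ⟨hb, hb'⟩ | ⟨hb, hb'⟩⟩
    · exact absurd (h ▸ hb'F) hbF
    · exact ⟨n, hn, Or.inl ⟨hb ▸ cyl_antitone a (le_max_left M M₁) hbc, hb' ▸ hb'F⟩⟩
    · exact ⟨n, hn, Or.inr ⟨hb ▸ cyl_antitone a (le_max_left M M₁) hbc, hb' ▸ hb'F⟩⟩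
  -- the witness index must be < M₁ for M ≥ M₁ (else the partner lands in cyl a M₁ ∩ F)
  have hsmall : ∀ M, M₁ ≤ M → ∀ n ∈ S,
      ((c n ∈ cyl a M ∧ x n ∈ F) ∨ (x n ∈ cyl a M ∧ c n ∈ F)) → n < M₁ := by
    intro M hM n hn h
    by_contra hge
    push_neg at hge
    rcases h with ⟨h1, h2⟩ | ⟨h1, h2⟩
    · -- x n agrees with c n below n ≥ M₁, c n ∈ cyl a M ⊆ cyl a M₁
      have : x n ∈ cyl a M₁ := by
        intro i hi
        rw [hagree n i (lt_of_lt_of_le hi hge)]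
        exact cyl_antitone a hM h1 i hi
      exact (hM₁ this) h2
    · have : c n ∈ cyl a M₁ := by
        intro i hi
        rw [← hagree n i (lt_of_lt_of_le hi hge)]
        exact cyl_antitone a hM h1 i hi
      exact (hM₁ this) h2
  -- pigeonhole: some fixed n < M₁ works for all M
  have hwit' : ∀ M, ∃ n, n < M₁ ∧ n ∈ S ∧
      ((c n ∈ cyl a M ∧ x n ∈ F) ∨ (x n ∈ cyl a M ∧ c n ∈ F)) := by
    intro M
    obtain ⟨n, hn, h⟩ := hwit (max M M₁)
    have hlt := hsmall (max M M₁) (le_max_right _ _) n hn h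
    refine ⟨n, hlt, hn, ?_⟩
    rcases h with ⟨h1, h2⟩ | ⟨h1, h2⟩
    · exact Or.inl ⟨cyl_antitone a (le_max_left _ _) h1, h2⟩
    · exact Or.inr ⟨cyl_antitone a (le_max_left _ _) h1, h2⟩
  -- extract a single n working for all M
  have hsingle : ∃ n, n ∈ S ∧ ∀ M,
      ((c n ∈ cyl a M ∧ x n ∈ F) ∨ (x n ∈ cyl a M ∧ c n ∈ F)) := by
    by_contra hno
    have hno' : ∀ n, n ∈ S → ∃ M,
        ¬((c n ∈ cyl a M ∧ x n ∈ F) ∨ (x n ∈ cyl a M ∧ c n ∈ F)) :=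
      fun n hn => not_forall.mp (fun h => hno ⟨n, hn, h⟩)
    classical
    choose MM hMM using hno'
    set f : ℕ → ℕ := fun n => if h : n ∈ S then MM n h else 0 with hf
    set Mstar : ℕ := (Finset.range M₁).sup f with hMstar
    obtain ⟨n, hlt, hnS, h⟩ := hwit' Mstar
    have hfn : f n = MM n hnS := dif_pos hnS
    have hle : MM n hnS ≤ Mstar := by
      rw [← hfn]; exact Finset.le_sup (Finset.mem_range.mpr hlt)
    apply hMM n hnS
    rcases h with ⟨h1, h2⟩ | ⟨h1, h2⟩
    · exact Or.inl ⟨cyl_antitone a hle h1, h2⟩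
    · exact Or.inr ⟨cyl_antitone a hle h1, h2⟩
  obtain ⟨n, hnS, hall⟩ := hsingle
  rcases (em (∀ M, c n ∈ cyl a M)) with h1 | h1
  · have hca : c n = a := eq_of_mem_all_cyl h1
    rcases hall 0 with ⟨_, h2⟩ | ⟨_, h2⟩
    · exact ha ⟨x n, Or.inr ⟨n, hnS, Or.inl ⟨hca.symm, rfl⟩⟩, h2⟩
    · exact haF (hca ▸ h2)
  · push_neg at h1
    obtain ⟨M₂, hM₂⟩ := h1
    have hx2 : ∀ M, x n ∈ cyl a M ∧ c n ∈ F := by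
      intro M
      rcases hall (max M M₂) with ⟨h1', _⟩ | ⟨h1', h2'⟩
      · exact absurd (cyl_antitone a (le_max_right _ _) h1') hM₂
      · exact ⟨cyl_antitone a (le_max_left _ _) h1', h2'⟩
    have hxa : x n = a := eq_of_mem_all_cyl fun M => (hx2 M).1
    exact ha ⟨c n, Or.inr ⟨n, hnS, Or.inr ⟨hxa.symm, rfl⟩⟩, (hx2 0).2⟩

include hcInj hxInj hxC in
lemma rel_equivalence : Equivalence (rel S c x) :=
  ⟨rel_refl, rel_symm, rel_trans hcInj hxInj hxC⟩

end Rel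

section Quot

variable {S : Set ℕ} {c x : ℕ → Ct}
    (hcInj : Set.InjOn c S) (hxInj : Function.Injective x)
    (hxC : ∀ n ∈ S, ∀ m ∈ S, x n ≠ c m)
    (hagree : ∀ n, ∀ i < n, x n i = c n i)

def relSetoid : Setoid Ct := ⟨rel S c x, rel_equivalence hcInj hxInj hxC⟩

local notation "s" => relSetoid hcInj hxInj hxC

lemma quot_compact : CompactSpace (Quotient (s)) := by
  constructor
  rw [← Set.image_univ_of_surjective (Quotient.mk_surjective)]
  exact isCompact_univ.image continuous_quotient_mk'

include hagree in
lemma quot_t2 : T2Space (Quotient (s)) := by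
  constructor
  intro p r hpr
  obtain ⟨a, rfl⟩ := Quotient.exists_rep p
  obtain ⟨b, rfl⟩ := Quotient.exists_rep r
  -- the two classes
  have hnrel : ¬ rel S c x a b := fun h => hpr (Quotient.sound h)
  set A : Set Ct := sat (S := S) (c := c) (x := x) {a} with hA
  set B : Set Ct := sat (S := S) (c := c) (x := x) {b} with hB
  have hAc : IsClosed A := sat_closed hagree isClosed_singleton
  have hBc : IsClosed B := sat_closed hagree isClosed_singleton
  have hdisj : Disjoint A B := by
    rw [Set.disjoint_left]
    rintro y ⟨a', hya, rfl⟩ ⟨b', hyb, rfl⟩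
    exact hnrel (rel_trans hcInj hxInj hxC (rel_symm hya) hyb)
  obtain ⟨U, V, hUo, hVo, hAU, hBV, hUV⟩ :=
    SeparatedNhds.of_isCompact_isCompact (hAc.isCompact) (hBc.isCompact) hdisj
  -- shrink to saturated open sets
  set U' : Set Ct := (sat (S := S) (c := c) (x := x) Uᶜ)ᶜ with hU'
  set V' : Set Ct := (sat (S := S) (c := c) (x := x) Vᶜ)ᶜ with hV'
  have hU'o : IsOpen U' := (sat_closed hagree hUo.isClosed_compl).isOpen_compl
  have hV'o : IsOpen V' := (sat_closed hagree hVo.isClosed_compl).isOpen_compl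
  have hU'sub : U' ⊆ U := fun y hy => by
    by_contra h; exact hy ⟨y, rel_refl y, h⟩
  have hV'sub : V' ⊆ V := fun y hy => by
    by_contra h; exact hy ⟨y, rel_refl y, h⟩
  have hU'sat : ∀ y z, rel S c x y z → y ∈ U' → z ∈ U' := by
    intro y z hyz hy hz
    obtain ⟨w, hzw, hw⟩ := hz
    exact hy ⟨w, rel_trans hcInj hxInj hxC hyz hzw, hw⟩
  have hV'sat : ∀ y z, rel S c x y z → y ∈ V' → z ∈ V' := by
    intro y z hyz hy hz
    obtain ⟨w, hzw, hw⟩ := hz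
    exact hy ⟨w, rel_trans hcInj hxInj hxC hyz hzw, hw⟩
  have haU' : a ∈ U' := by
    intro ⟨w, hw, hwU⟩
    exact hwU (hAU ⟨a, rel_symm hw, rfl⟩)
  have hbV' : b ∈ V' := by
    intro ⟨w, hw, hwV⟩
    exact hwV (hBV ⟨b, rel_symm hw, rfl⟩)
  refine ⟨Quotient.mk _ '' U', Quotient.mk _ '' V', ?_, ?_, ⟨a, haU', rfl⟩, ⟨b, hbV', rfl⟩, ?_⟩
  · rw [isQuotientMap_quotient_mk'.isOpen_preimage.symm]
    have : Quotient.mk (s) ⁻¹' (Quotient.mk (s) '' U') = U' := by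
      apply Set.Subset.antisymm
      · rintro y ⟨z, hz, hzy⟩
        exact hU'sat z y (Quotient.exact hzy) hz
      · exact Set.subset_preimage_image _ _
    show IsOpen (Quotient.mk (s) ⁻¹' (Quotient.mk (s) '' U'))
    rw [this]; exact hU'o
  · rw [isQuotientMap_quotient_mk'.isOpen_preimage.symm]
    have : Quotient.mk (s) ⁻¹' (Quotient.mk (s) '' V') = V' := by
      apply Set.Subset.antisymm
      · rintro y ⟨z, hz, hzy⟩
        exact hV'sat z y (Quotient.exact hzy) hz
      · exact Set.subset_preimage_image _ _
    show IsOpen (Quotient.mk (s) ⁻¹' (Quotient.mk (s) '' V'))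
    rw [this]; exact hV'o
  · rw [Set.disjoint_left]
    rintro _ ⟨y, hy, rfl⟩ ⟨z, hz, hzy⟩
    have : y ∈ V' := hV'sat z y (Quotient.exact hzy) hz
    exact (hUV.le_bot ⟨hU'sub hy, hV'sub this⟩ : False)

end Quot

lemma main_construction (C : Set Ct) (hC : C.Countable) :
    ∃ (K : Type) (_ : TopologicalSpace K), CompactSpace K ∧ T2Space K ∧
      ∃ g : Ct → K, Continuous g ∧ (∀ a, a ∉ C → ∀ b, b ∉ C → g a = g b → a = b) ∧
        (∀ z : K, ∃ a, a ∉ C ∧ g a = z) := by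
  rcases C.eq_empty_or_nonempty with rfl | hne
  · exact ⟨Ct, inferInstance, inferInstance, inferInstance, id, continuous_id,
      fun a _ b _ h => h, fun z => ⟨z, by simp, rfl⟩⟩
  · have hCc : Countable ↥C := hC.to_subtype
    have hCne : Nonempty ↥C := hne.to_subtype
    obtain ⟨f, hf⟩ := Countable.exists_injective_nat ↥C
    set S : Set ℕ := Set.range f with hS
    set c : ℕ → Ct := fun n => ↑(Function.invFun f n) with hc
    have hinv : ∀ u : ↥C, Function.invFun f (f u) = u := fun u =>
      Function.leftInverse_invFun hf u
    have hcInj : Set.InjOn c S := by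
      rintro _ ⟨u, rfl⟩ _ ⟨v, rfl⟩ h
      rw [hc] at h
      simp only [hinv] at h
      exact congrArg f (Subtype.ext h)
    have hcS : c '' S = C := by
      apply Set.Subset.antisymm
      · rintro _ ⟨_, ⟨u, rfl⟩, rfl⟩
        rw [hc]; simp only [hinv]; exact u.2
      · intro a ha
        exact ⟨f ⟨a, ha⟩, ⟨⟨a, ha⟩, rfl⟩, by rw [hc]; simp only [hinv]⟩
    set x : ℕ → Ct := xseq C hC c with hx
    have hxInj : Function.Injective x := xseq_injective C hC c
    have hxnC : ∀ n, x n ∉ C := fun n => (xseq_spec C hC c n).2.1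
    have hagree : ∀ n, ∀ i < n, x n i = c n i := fun n => (xseq_spec C hC c n).1
    have hxC : ∀ n ∈ S, ∀ m ∈ S, x n ≠ c m := by
      intro n _ m hm h
      exact hxnC n (h ▸ (hcS ▸ Set.mem_image_of_mem c hm))
    refine ⟨Quotient (relSetoid hcInj hxInj hxC), inferInstance,
      quot_compact hcInj hxInj hxC, quot_t2 hcInj hxInj hxC hagree,
      Quotient.mk _, continuous_quotient_mk', ?_, ?_⟩
    · intro a ha b hb h
      rcases Quotient.exact h with h' | ⟨n, hn, ⟨h1, _⟩ | ⟨_, h2⟩⟩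
      · exact h'
      · exact absurd (h1 ▸ (hcS ▸ Set.mem_image_of_mem c hn) : a ∈ C) ha
      · exact absurd (h2 ▸ (hcS ▸ Set.mem_image_of_mem c hn) : b ∈ C) hb
    · intro z
      obtain ⟨w, rfl⟩ := Quotient.exists_rep z
      by_cases hw : w ∈ C
      · obtain ⟨n, hn, hcn⟩ : ∃ n ∈ S, c n = w := by
          rw [← hcS] at hw
          obtain ⟨n, hn, hcn⟩ := hw
          exact ⟨n, hn, hcn⟩
        exact ⟨x n, hxnC n, Quotient.sound (Or.inr ⟨n, hn, Or.inr ⟨rfl, hcn.symm⟩⟩)⟩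
      · exact ⟨w, hw, rfl⟩

section Baire

theorem baireSpace_of_homeomorph {X Y : Type*} [TopologicalSpace X] [TopologicalSpace Y]
    (e : X ≃ₜ Y) (hY : BaireSpace Y) : BaireSpace X := by
  constructor
  intro f ho hd
  have h1 : Dense (⋂ n, e '' f n) :=
    dense_iInter_of_isOpen_nat (fun n => e.isOpenMap _ (ho n))
      (fun n => e.surjective.denseRange.dense_image e.continuous (hd n))
  have h2 : Dense (e.symm '' ⋂ n, e '' f n) :=
    e.symm.surjective.denseRange.dense_image e.symm.continuous h1
  have h3 : (e.symm '' ⋂ n, e '' f n) = ⋂ n, f n := by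
    rw [(e.symm.injective.injOn).image_iInter_eq]
    have h4 : ∀ s : Set X, e.symm '' (e '' s) = s := fun s => e.toEquiv.symm_image_image s
    simp only [h4]
  rwa [h3] at h2

theorem baire_dense_compl {Z : Type*} [TopologicalSpace Z] [CompactSpace Z] [T2Space Z]
    (D : Set Z) (hD : D.Countable) (hdense : Dense (Dᶜ)) : BaireSpace ↥(Dᶜ) := by
  constructor
  intro f ho hd
  choose U hUo hUeq using fun n => (isOpen_induced_iff.mp (ho n))
  have hUd : ∀ n, Dense (U n) := by
    intro n
    have h1 : Dense ((Subtype.val : ↥(Dᶜ) → Z) '' f n) := by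
      refine DenseRange.dense_image ?_ continuous_subtype_val (hd n)
      exact hdense.denseRange_val
    refine h1.mono ?_
    rw [← hUeq n]
    exact Set.image_preimage_subset _ _
  obtain ⟨S, hSd, hSsub⟩ : ∃ S : Set Z, Dense S ∧ S ⊆ (⋂ n, U n) ∩ Dᶜ := by
    rcases D.eq_empty_or_nonempty with rfl | hne
    · refine ⟨⋂ n, U n, dense_iInter_of_isOpen_nat hUo hUd, ?_⟩
      simp
    · obtain ⟨d, hd_range⟩ := hD.exists_eq_range hne
      have hWd : ∀ n, Dense ({d n}ᶜ : Set Z) := by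
        intro n
        rw [dense_iff_inter_open]
        intro O hOo hOne
        by_contra hno
        push_neg at hno
        have hsub : O ⊆ {d n} := by
          intro y hy
          by_contra hyne
          exact (Set.eq_empty_iff_forall_notMem.mp hno y) ⟨hy, hyne⟩
        obtain ⟨y, hyO⟩ := hOne
        obtain ⟨w, hw1, hw2⟩ := hdense.inter_open_nonempty O hOo ⟨y, hyO⟩
        have hw : w = d n := hsub hw1
        exact hw2 (by rw [hd_range]; exact ⟨n, hw.symm⟩)
      set G : ℕ ⊕ ℕ → Set Z := Sum.elim U (fun n => {d n}ᶜ) with hG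
      have hGo : ∀ i, IsOpen (G i) := by
        rintro (n | n)
        · exact hUo n
        · exact isOpen_compl_singleton
      have hGd : ∀ i, Dense (G i) := by
        rintro (n | n)
        · exact hUd n
        · exact hWd n
      refine ⟨⋂ i, G i, dense_iInter_of_isOpen hGo hGd, ?_⟩
      intro z hz
      simp only [Set.mem_iInter] at hz
      refine ⟨Set.mem_iInter.mpr fun n => hz (Sum.inl n), ?_⟩
      intro hzD
      rw [hd_range] at hzD
      obtain ⟨n, rfl⟩ := hzD
      exact (hz (Sum.inr n)) rfl
  -- conclude density in the subspace
  rw [dense_iff_inter_open]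
  intro O hOo hOne
  obtain ⟨V, hVo, rfl⟩ := isOpen_induced_iff.mp hOo
  obtain ⟨y0, hyO⟩ := hOne
  obtain ⟨w, hwV, hwS⟩ := hSd.inter_open_nonempty V hVo ⟨↑y0, hyO⟩
  obtain ⟨hwU, hwD⟩ := hSsub hwS
  refine ⟨⟨w, hwD⟩, hwV, ?_⟩
  rw [Set.mem_iInter] at hwU ⊢
  intro n
  rw [← hUeq n]
  exact hwU n

theorem baireSpace_compl_countable {Y : Type*} [TopologicalSpace Y] [CompactSpace Y] [T2Space Y]
    (C : Set Y) (hC : C.Countable) : BaireSpace ↥(Cᶜ) := by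
  set Z : Set Y := closure (Cᶜ) with hZ
  haveI : CompactSpace ↥Z := isCompact_iff_compactSpace.mp (isClosed_closure.isCompact)
  set D : Set ↥Z := (Subtype.val) ⁻¹' C with hD
  have hDc : D.Countable := hC.preimage Subtype.val_injective
  have hdense : Dense (Dᶜ : Set ↥Z) := by
    intro z
    rw [closure_subtype]
    have himg : (Subtype.val : ↥Z → Y) '' (Dᶜ) = Cᶜ := by
      have : (Dᶜ : Set ↥Z) = Subtype.val ⁻¹' Cᶜ := rfl
      rw [this, Subtype.image_preimage_coe]
      exact Set.inter_eq_self_of_subset_right subset_closure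
    rw [himg]
    exact z.2
  have hB : BaireSpace ↥(Dᶜ) := baire_dense_compl D hDc hdense
  refine baireSpace_of_homeomorph ?_ hB
  exact {
    toFun := fun y => ⟨⟨y.1, subset_closure y.2⟩, fun h => y.2 h⟩
    invFun := fun z => ⟨z.1.1, z.2⟩
    left_inv := fun y => rfl
    right_inv := fun z => rfl
    continuous_toFun := by
      refine Continuous.subtype_mk ?_ _
      exact Continuous.subtype_mk continuous_subtype_val _
    continuous_invFun := by
      refine Continuous.subtype_mk ?_ _
      exact continuous_subtype_val.comp continuous_subtype_val }

end Baire

section Space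

def Dd : Type := ℕ → Bool

instance : TopologicalSpace Dd := ⊥
instance : DiscreteTopology Dd := ⟨rfl⟩

def ddEquivCt : Dd ≃ Ct := Equiv.refl (ℕ → Bool)

abbrev X0 : Type := (Ct × ℚ) ⊕ Dd

/-- map `ℚ → Ct` via irrational cuts -/
noncomputable def qmap : ℚ → Ct := fun q n =>
  decide ((q : ℝ) < ((Denumerable.eqv ℚ).symm n : ℚ) + Real.sqrt 2)

lemma qmap_continuous : Continuous qmap := by
  refine continuous_pi fun n => ?_
  set t : ℝ := (((Denumerable.eqv ℚ).symm n : ℚ) : ℝ) + Real.sqrt 2 with ht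
  have hirr : Irrational t := irrational_sqrt_two.ratCast_add _
  refine IsLocallyConstant.continuous ?_
  rw [IsLocallyConstant.iff_isOpen_fiber]
  intro b
  have hfeq : (fun a : ℚ => qmap a n) = (fun q : ℚ => decide ((q : ℝ) < t)) := rfl
  have hlt : IsOpen {q : ℚ | (q : ℝ) < t} :=
    isOpen_Iio.preimage Rat.continuous_coe_real
  have hgt : IsOpen {q : ℚ | t < (q : ℝ)} :=
    isOpen_Ioi.preimage Rat.continuous_coe_real
  cases b
  · -- fiber of false : ¬ (q < t), and q ≠ t since t irrational
    have : (fun q : ℚ => decide ((q : ℝ) < t)) ⁻¹' {false} = {q : ℚ | t < (q : ℝ)} := by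
      ext q
      simp only [Set.mem_preimage, Set.mem_singleton_iff, Set.mem_setOf_eq,
        decide_eq_false_iff_not, not_lt]
      constructor
      · intro h
        exact lt_of_le_of_ne h (hirr.ne_rat q)
      · exact le_of_lt
    rw [hfeq, this]; exact hgt
  · have : (fun q : ℚ => decide ((q : ℝ) < t)) ⁻¹' {true} = {q : ℚ | (q : ℝ) < t} := by
      ext q
      simp [decide_eq_true_eq]
    rw [hfeq, this]; exact hlt

lemma qmap_injective : Function.Injective qmap := by
  have key : ∀ q q' : ℚ, q < q' → qmap q ≠ qmap q' := by
    intro q q' hlt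
    obtain ⟨r, hr1, hr2⟩ := exists_rat_btwn
      (show (q : ℝ) - Real.sqrt 2 < (q' : ℝ) - Real.sqrt 2 by
        have : (q : ℝ) < q' := by exact_mod_cast hlt
        linarith)
    set n : ℕ := Denumerable.eqv ℚ r with hn
    intro h
    have hval := congrFun h n
    have hrn : ((Denumerable.eqv ℚ).symm n : ℚ) = r := by
      rw [hn]; exact (Denumerable.eqv ℚ).symm_apply_apply r
    rw [qmap, qmap] at hval
    simp only [hrn] at hval
    have h1 : (q : ℝ) < (r : ℝ) + Real.sqrt 2 := by linarith [hr1]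
    have h2 : ¬ ((q' : ℝ) < (r : ℝ) + Real.sqrt 2) := by
      push_neg
      linarith [hr2]
    rw [decide_eq_decide] at hval
    exact h2 (hval.mp h1)
  intro q q' h
  by_contra hne
  rcases lt_or_gt_of_ne hne with h' | h'
  · exact key q q' h' h
  · exact key q' q h' h.symm

/-- pairing homeomorphism -/
noncomputable def pairCt : (Ct × Ct) ≃ₜ Ct :=
  (Homeomorph.sumArrowHomeomorphProdArrow).symm.trans
    (Homeomorph.piCongrLeft (Y := fun _ : ℕ => Bool) Equiv.natSumNatEquivNat)

/-- prepend a bit -/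
def prep (b : Bool) : Ct → Ct := fun y n => Nat.casesOn n b fun m => y m

lemma prep_continuous (b : Bool) : Continuous (prep b) := by
  refine continuous_pi fun n => ?_
  cases n with
  | zero => exact continuous_const
  | succ m => exact continuous_apply m

lemma prep_injective (b : Bool) : Function.Injective (prep b) := by
  intro y z h
  funext m
  exact congrFun h (m + 1)

lemma prep_zero (b : Bool) (y : Ct) : prep b y 0 = b := rfl

/-- the condensation of the left part into `Ct` -/
noncomputable def hemb : Ct × ℚ → Ct := fun p => prep false (pairCt (p.1, qmap p.2))

lemma hemb_continuous : Continuous hemb :=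
  (prep_continuous false).comp <| pairCt.continuous.comp <|
    continuous_fst.prodMk (qmap_continuous.comp continuous_snd)

lemma hemb_injective : Function.Injective hemb := by
  intro p p' h
  have h2 := pairCt.injective ((prep_injective false) h)
  have h3 : p.1 = p'.1 := (Prod.ext_iff.mp h2).1
  have h4 : qmap p.2 = qmap p'.2 := (Prod.ext_iff.mp h2).2
  exact Prod.ext h3 (qmap_injective h4)

lemma hemb_zero (p : Ct × ℚ) : hemb p 0 = false := rfl

/-- complement of a countable set in an uncountable type has full cardinality -/
lemma mk_compl_countable {α : Type} [Uncountable α] {s : Set α} (hs : s.Countable) :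
    #↥(sᶜ) = #α := by
  apply le_antisymm (Cardinal.mk_set_le _)
  have h1 : #α ≤ #↥s + #↥(sᶜ) := le_of_eq (Cardinal.mk_sum_compl s).symm
  have hsle : #↥s ≤ aleph0 := hs.le_aleph0
  by_cases h2 : #↥(sᶜ) ≤ aleph0
  · exfalso
    have : #α ≤ aleph0 + aleph0 := h1.trans (add_le_add hsle h2)
    rw [Cardinal.aleph0_add_aleph0] at this
    rw [Cardinal.mk_le_aleph0_iff] at this
    exact (inferInstance : Uncountable α).not_countable this
  · push_neg at h2
    have h3 : aleph0 ≤ #↥(sᶜ) := le_of_lt h2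
    calc #α ≤ #↥s + #↥(sᶜ) := h1
    _ ≤ aleph0 + #↥(sᶜ) := add_le_add hsle le_rfl
    _ = #↥(sᶜ) := Cardinal.add_eq_right h3 h3

lemma mk_compl_false_set (A : Set Ct) (hA : ∀ z ∈ A, z 0 = false) : #↥(Aᶜ) = #Ct := by
  apply le_antisymm (Cardinal.mk_set_le _)
  refine Cardinal.mk_le_of_injective (f := fun y : Ct => (⟨prep true y, ?_⟩ : ↥(Aᶜ))) ?_
  · intro hmem
    have := hA _ hmem
    rw [prep_zero] at this
    exact Bool.true_eq_false ▸ (by simp at this)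
  · intro y z h
    exact prep_injective true (congrArg Subtype.val h)

lemma uncountable_Dd : Uncountable Dd := (inferInstance : Uncountable Ct)

/-- the condensation of `X0` minus a countable set onto `Ct` -/
lemma X0_condensation (C : Set X0) (hC : C.Countable) :
    ∃ g : X0 → Ct, Continuous g ∧ (∀ a, a ∉ C → ∀ b, b ∉ C → g a = g b → a = b) ∧
      (∀ z : Ct, ∃ a, a ∉ C ∧ g a = z) := by
  classical
  haveI := uncountable_Dd
  set L : Set (Ct × ℚ) := {p | Sum.inl p ∉ C} with hL
  set CD : Set Dd := {d | Sum.inr d ∈ C} with hCD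
  have hCDc : CD.Countable := by
    have : CD = Sum.inr ⁻¹' C := rfl
    rw [this]
    exact hC.preimage Sum.inr_injective
  set T : Set Ct := (hemb '' L)ᶜ with hT
  have hTcard : #↥T = #Ct := by
    apply mk_compl_false_set
    rintro z ⟨p, _, rfl⟩
    exact hemb_zero p
  have hDcard : #↥(CDᶜ) = #Ct := by
    rw [mk_compl_countable hCDc]
    exact Cardinal.mk_congr ddEquivCt
  obtain ⟨φ⟩ : Nonempty (↥(CDᶜ) ≃ ↥T) := Cardinal.eq.mp (hDcard.trans hTcard.symm)
  set g : X0 → Ct := Sum.elim hemb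
    (fun d => if h : d ∈ CDᶜ then (φ ⟨d, h⟩ : Ct) else (fun _ => false)) with hg
  refine ⟨g, ?_, ?_, ?_⟩
  · refine Continuous.sumElim hemb_continuous ?_
    exact continuous_of_discreteTopology
  · rintro (p | d) ha (p' | d') hb h
    · rw [hg] at h
      simp only [Sum.elim_inl] at h
      rw [hemb_injective h]
    · -- inl vs inr : images in complementary sets
      exfalso
      have hd' : d' ∈ CDᶜ := fun hmem => hb hmem
      rw [hg] at h
      simp only [Sum.elim_inl, Sum.elim_inr, dif_pos hd'] at h
      have hmem : hemb p ∈ hemb '' L := ⟨p, ha, rfl⟩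
      rw [h] at hmem
      exact (φ ⟨d', hd'⟩).2 hmem
    · exfalso
      have hd : d ∈ CDᶜ := fun hmem => ha hmem
      rw [hg] at h
      simp only [Sum.elim_inl, Sum.elim_inr, dif_pos hd] at h
      have hmem : hemb p' ∈ hemb '' L := ⟨p', hb, rfl⟩
      rw [← h] at hmem
      exact (φ ⟨d, hd⟩).2 hmem
    · have hd : d ∈ CDᶜ := fun hmem => ha hmem
      have hd' : d' ∈ CDᶜ := fun hmem => hb hmem
      rw [hg] at h
      simp only [Sum.elim_inr, dif_pos hd, dif_pos hd'] at h
      have := φ.injective (Subtype.ext h)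
      rw [show d = d' from congrArg Subtype.val this]
  · intro z
    by_cases hz : z ∈ hemb '' L
    · obtain ⟨p, hp, rfl⟩ := hz
      exact ⟨Sum.inl p, hp, rfl⟩
    · have hzT : z ∈ T := hz
      set w := φ.symm ⟨z, hzT⟩ with hw
      refine ⟨Sum.inr w.1, w.2, ?_⟩
      rw [hg]
      simp only [Sum.elim_inr, dif_pos w.2]
      have : φ ⟨w.1, w.2⟩ = ⟨z, hzT⟩ := by
        rw [show (⟨w.1, w.2⟩ : ↥(CDᶜ)) = w from rfl, hw]
        exact φ.apply_symm_apply _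
      rw [this]

/-- X0 is not a Baire space -/
lemma not_baire_X0 : ¬ BaireSpace X0 := by
  intro hB
  set W : ℕ → Set X0 := fun n =>
    (Sum.inl '' (Set.univ ×ˢ ({(Denumerable.eqv ℚ).symm n} : Set ℚ)))ᶜ with hW
  have hWo : ∀ n, IsOpen (W n) := by
    intro n
    exact (IsClosedEmbedding.inl.isClosedMap _
      (isClosed_univ.prod isClosed_singleton)).isOpen_compl
  have hWd : ∀ n, Dense (W n) := by
    intro n
    rw [dense_iff_inter_open]
    rintro O hOo ⟨y0, hy0⟩
    rcases y0 with p | d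
    · by_cases hq : p.2 = (Denumerable.eqv ℚ).symm n
      · -- wiggle the rational coordinate
        have hO1 : IsOpen (Sum.inl ⁻¹' O : Set (Ct × ℚ)) :=
          hOo.preimage continuous_inl
        obtain ⟨U, V, hUo, hVo, haU, hqV, hUV⟩ :=
          isOpen_prod_iff.mp hO1 p.1 p.2 hy0
        obtain ⟨ε, hε, hball⟩ := Metric.isOpen_iff.mp hVo p.2 hqV
        obtain ⟨δ, hδ0, hδε⟩ := exists_rat_btwn hε
        have hδ0' : (0 : ℚ) < δ := by exact_mod_cast hδ0
        set q' : ℚ := p.2 + δ with hq'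
        have hq'V : q' ∈ V := by
          apply hball
          rw [Metric.mem_ball, Rat.dist_eq]
          have heq : (q' : ℝ) - (p.2 : ℝ) = (δ : ℝ) := by
            rw [hq']; push_cast; ring
          rw [heq, abs_of_pos hδ0]
          exact hδε
        refine ⟨Sum.inl (p.1, q'), hUV ⟨haU, hq'V⟩, ?_⟩
        rintro ⟨p'', ⟨-, hp2⟩, hpeq⟩
        have hpp : p'' = (p.1, q') := Sum.inl_injective hpeq
        rw [hpp] at hp2
        simp only [Set.mem_singleton_iff] at hp2
        rw [← hq] at hp2
        have hzd : (q' : ℚ) = p.2 := hp2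
        rw [hq'] at hzd
        have : (0 : ℚ) = δ := by linarith
        exact absurd this.symm (ne_of_gt hδ0')
      · refine ⟨Sum.inl p, hy0, ?_⟩
        rintro ⟨p'', ⟨-, hp2⟩, hpeq⟩
        have hpp : p'' = p := Sum.inl_injective hpeq
        rw [hpp] at hp2
        exact hq hp2
    · refine ⟨Sum.inr d, hy0, ?_⟩
      rintro ⟨p'', -, hpeq⟩
      exact Sum.inl_ne_inr hpeq
  have hD : Dense (⋂ n, W n) := dense_iInter_of_isOpen_nat hWo hWd
  have hopen : IsOpen (Set.range (Sum.inl : Ct × ℚ → X0)) :=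
    IsOpenEmbedding.inl.isOpen_range
  obtain ⟨y, hy1, hy2⟩ := hD.inter_open_nonempty _ hopen
    ⟨Sum.inl ((fun _ => false), 0), ⟨((fun _ => false), 0), rfl⟩⟩
  obtain ⟨p, rfl⟩ := hy1
  rw [Set.mem_iInter] at hy2
  apply hy2 (Denumerable.eqv ℚ p.2)
  refine ⟨p, ⟨Set.mem_univ _, ?_⟩, rfl⟩
  simp only [Set.mem_singleton_iff]
  exact ((Denumerable.eqv ℚ).symm_apply_apply p.2).symm

end Space


section Transfer

/-- transfer a condensation statement along homeomorphisms -/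
lemma transfer_condensation {α β : Type} [TopologicalSpace α] [TopologicalSpace β]
    {X' : Type u} [TopologicalSpace X'] {Y' : Type u} [TopologicalSpace Y']
    (eX : X' ≃ₜ α) (eY : Y' ≃ₜ β) (C : Set X')
    (H : ∃ g : α → β, Continuous g ∧
      (∀ a, a ∉ eX '' C → ∀ b, b ∉ eX '' C → g a = g b → a = b) ∧
      (∀ z, ∃ a, a ∉ eX '' C ∧ g a = z)) :
    ∃ g : X' → Y', Continuous g ∧ Function.Bijective (fun x : ↥(Cᶜ) => g ↑x) := by
  obtain ⟨g, hgc, hgi, hgs⟩ := H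
  refine ⟨fun x => eY.symm (g (eX x)), (eY.symm.continuous.comp (hgc.comp eX.continuous)), ?_, ?_⟩
  · intro x y h
    have h1 : g (eX ↑x) = g (eX ↑y) := eY.symm.injective h
    have hx : eX ↑x ∉ eX '' C := by
      rintro ⟨e, he, heq⟩
      exact x.2 ((eX.injective heq) ▸ he)
    have hy : eX ↑y ∉ eX '' C := by
      rintro ⟨e, he, heq⟩
      exact y.2 ((eX.injective heq) ▸ he)
    have := eX.injective (hgi _ hx _ hy h1)
    exact Subtype.ext this
  · intro y'
    obtain ⟨a, haC, hag⟩ := hgs (eY y')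
    have haC' : eX.symm a ∉ C := by
      intro hmem
      exact haC ⟨eX.symm a, hmem, eX.apply_symm_apply a⟩
    refine ⟨⟨eX.symm a, haC'⟩, ?_⟩
    simp only []
    rw [eX.apply_symm_apply, hag, eY.symm_apply_apply]

lemma strict_ulift_Ct : StrictATauSpace Cardinal.aleph0 (ULift.{u} Ct) := by
  refine ⟨inferInstance, inferInstance, ?_⟩
  intro E hE
  have hEc : E.Countable := Set.countable_coe_iff.mp (Cardinal.mk_le_aleph0_iff.mp hE)
  have hE0c : ((Homeomorph.ulift (X := Ct)) '' E).Countable := hEc.image _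
  obtain ⟨K, tK, hKc, hKt2, hg⟩ := main_construction _ hE0c
  refine ⟨ULift.{u} K, by letI := tK; exact inferInstance, ?_, ?_, ?_⟩
  · letI := tK
    haveI := hKc
    exact inferInstance
  · letI := tK
    haveI := hKt2
    exact inferInstance
  · letI := tK
    haveI := hKc
    haveI := hKt2
    exact transfer_condensation (Homeomorph.ulift) (Homeomorph.ulift) E hg

end Transfer

end Stmt1

/-- there is a strictly `a_ℵ₀`-subcompact Hausdorff space `X` which is not
homeomorphic to `Y \ C` for any `a_ℵ₀`-space `Y` and countable `C ⊆ Y`. -/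
theorem stmt_1 :
    ∃ (X : Type u) (_ : TopologicalSpace X), T2Space X ∧
      StrictATauSubcompact Cardinal.aleph0 X ∧
      ∀ (Y : Type u) (_ : TopologicalSpace Y), ATauSpace Cardinal.aleph0 Y →
        ∀ C : Set Y, C.Countable → IsEmpty (X ≃ₜ ↥(Cᶜ)) := by
  classical
  refine ⟨ULift.{u} Stmt1.X0, inferInstance, inferInstance, ?_, ?_⟩
  · -- strictly a-subcompact
    intro C hCcard
    have hCc : C.Countable := Set.countable_coe_iff.mp (Cardinal.mk_le_aleph0_iff.mp hCcard)
    refine ⟨ULift.{u} Stmt1.Ct, inferInstance, Stmt1.strict_ulift_Ct, ?_⟩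
    have hC0c : ((Homeomorph.ulift (X := Stmt1.X0)) '' C).Countable := hCc.image _
    exact Stmt1.transfer_condensation (Homeomorph.ulift) (Homeomorph.ulift) C
      (Stmt1.X0_condensation _ hC0c)
  · -- not homeomorphic to an a-space minus a countable set
    intro Y tY hY C hCc
    constructor
    intro e
    haveI : CompactSpace Y := hY.1
    haveI : T2Space Y := hY.2.1
    have hBc : BaireSpace ↥(Cᶜ) := Stmt1.baireSpace_compl_countable C hCc
    have hBX : BaireSpace (ULift.{u} Stmt1.X0) := Stmt1.baireSpace_of_homeomorph e hBc
    have hB0 : BaireSpace Stmt1.X0 :=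
      Stmt1.baireSpace_of_homeomorph (Homeomorph.ulift (X := Stmt1.X0)).symm hBX
    exact Stmt1.not_baire_X0 hB0
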